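/- For every ε > 0 there exists ζ > 0 with the following property: if μ and μ′ are Borel probability measures on the dyadic Cantor set 𝕂 satisfying the non-homogeneous Markov property (M) for weight sequences (p_n, q_n)_{n∈ℕ} and (p′_n, q′_n)_{n∈ℕ} respectively, and sup_{n∈ℕ} max(|p_n − p′_n|, |q_n − q′_n|) < ζ, then |h^*(μ) − h^*(μ′)| < ε (equivalently, by the paper's main theorem, the lower packing dimensions of μ and μ′ differ by less than ε). -/

import Mathlib

open MeasureTheory Filter Topology
open scoped ENNReal NNReal

noncomputable section

/-- The dyadic Cantor set `𝕂 = {0,1}^ℕ`. -/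
abbrev K : Type := ℕ → Bool

/-- The metric `d(x,y) = (1/2)^(first index where x and y differ)` on `𝕂`. -/
instance : MetricSpace K := PiNat.metricSpace

/-- The cylinder of generation `n` determined by the word `ε : Fin n → Bool`. -/
def cyl {n : ℕ} (ε : Fin n → Bool) : Set K := {x | ∀ i : Fin n, x i = ε i}

/-- The cylinder `I_n(x)` of generation `n` containing the point `x`. -/
def cylAt (x : K) (n : ℕ) : Set K := cyl (fun i : Fin n => x i)

/-- The weight attributed to a child cylinder whose parent's last letter is `e`, when the
new letter is `b`, by the non-homogeneous Markov process with weights `pq = (pₙ, qₙ)`. -/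
def weight (pq : ℝ × ℝ) (e b : Bool) : ℝ :=
  if e = false then (if b = false then pq.1 else 1 - pq.1)
  else (if b = false then pq.2 else 1 - pq.2)

/-- A Borel measure `μ` on `𝕂` satisfies the non-homogeneous Markov property (M)
for the sequences `(p n)`, `(q n)`: `μ(I₀) = p₀`, `μ(I₁) = 1 - p₀`, and the ratio
`μ(IJ)/μ(I)` for a cylinder `I ∈ ℱ_{n+1}` and a child `IJ ∈ ℱ_{n+2}` is `p (n+1)`,
`1 - p (n+1)`, `q (n+1)` or `1 - q (n+1)` according to the last letter of `I` and
the new letter of `IJ`. -/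
def MarkovMeasure (μ : Measure K) (p q : ℕ → ℝ) : Prop :=
  μ (cyl ![false]) = ENNReal.ofReal (p 0) ∧
  μ (cyl ![true]) = ENNReal.ofReal (1 - p 0) ∧
  ∀ (n : ℕ) (ε : Fin (n + 1) → Bool) (b : Bool),
    μ (cyl (Fin.snoc ε b)) =
      μ (cyl ε) * ENNReal.ofReal (weight (p (n + 1), q (n + 1)) (ε (Fin.last n)) b)

/-- `Σ_{I ∈ ℱ_n} μ(I) log μ(I)` (with the convention `0 · log 0 = 0`,
automatic since `Real.log 0 = 0`). -/
def entropySum (μ : Measure K) (n : ℕ) : ℝ :=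
  ∑ ε : Fin n → Bool, (μ (cyl ε)).toReal * Real.log (μ (cyl ε)).toReal

/-- The lower entropy `h_*(μ) = liminf (-1/(n log 2)) Σ_{I ∈ ℱ_n} μ(I) log μ(I)`. -/
def hLow (μ : Measure K) : ℝ :=
  liminf (fun n : ℕ => (-1 / (n * Real.log 2)) * entropySum μ n) atTop

/-- The upper entropy `h^*(μ) = limsup (-1/(n log 2)) Σ_{I ∈ ℱ_n} μ(I) log μ(I)`. -/
def hUpp (μ : Measure K) : ℝ :=
  limsup (fun n : ℕ => (-1 / (n * Real.log 2)) * entropySum μ n) atTop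

/-- The lower Hausdorff dimension of a measure:
`dim_*(μ) = inf {dim_H E : E ⊆ 𝕂 Borel, μ(E) > 0}`. -/
def dimLow (μ : Measure K) : ℝ≥0∞ :=
  ⨅ (E : Set K) (_ : MeasurableSet E) (_ : 0 < μ E), dimH E

/-- The upper Hausdorff dimension of a measure:
`dim^*(μ) = inf {dim_H E : E ⊆ 𝕂 Borel, μ(𝕂 ∖ E) = 0}`. -/
def dimUpp (μ : Measure K) : ℝ≥0∞ :=
  ⨅ (E : Set K) (_ : MeasurableSet E) (_ : μ Eᶜ = 0), dimH E

namespace MarkovAux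

/-- transition probability of the letter `false` at the step from generation `n` to
generation `n+1`, given that the last letter of the parent is `e`. -/
def tr (p q : ℕ → ℝ) (n : ℕ) (e : Bool) : ℝ :=
  if n = 0 then p 0 else (bif e then q n else p n)

/-- last letter of a word (`false` for the empty word). -/
def lastb : {n : ℕ} → (Fin n → Bool) → Bool
  | 0, _ => false
  | _+1, ε => ε (Fin.last _)

/-- weight (measure) of a cylinder under the Markov process. -/
def W (p q : ℕ → ℝ) : (n : ℕ) → (Fin n → Bool) → ℝ
  | 0, _ => 1
  | n+1, ε => W p q n (Fin.init ε) *
      (bif ε (Fin.last n) then 1 - tr p q n (lastb (Fin.init ε))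
        else tr p q n (lastb (Fin.init ε)))

variable {p q : ℕ → ℝ}

lemma W_snoc (n : ℕ) (ε : Fin n → Bool) (b : Bool) :
    W p q (n+1) (Fin.snoc ε b)
      = W p q n ε * (bif b then 1 - tr p q n (lastb ε) else tr p q n (lastb ε)) := by
  simp [W, Fin.init_snoc, Fin.snoc_last]

lemma tr_mem (hp : ∀ n, p n ∈ Set.Ioo (0:ℝ) 1) (hq : ∀ n, q n ∈ Set.Ioo (0:ℝ) 1)
    (n : ℕ) (e : Bool) : tr p q n e ∈ Set.Ioo (0:ℝ) 1 := by
  unfold tr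
  split
  · exact hp 0
  · cases e
    · exact hp n
    · exact hq n

lemma sum_snoc {M : Type*} [AddCommMonoid M] (n : ℕ) (f : (Fin (n+1) → Bool) → M) :
    ∑ ε : Fin (n+1) → Bool, f ε
      = ∑ ε : Fin n → Bool, (f (Fin.snoc ε false) + f (Fin.snoc ε true)) := by
  rw [← (Fin.snocEquiv (fun _ => Bool)).sum_comp f, Fintype.sum_prod_type, Fintype.sum_bool,
    ← Finset.sum_add_distrib]
  simp [Fin.snocEquiv, add_comm]

lemma sum_W (n : ℕ) : ∑ ε : Fin n → Bool, W p q n ε = 1 := by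
  induction n with
  | zero => simp [W]
  | succ n ih =>
    rw [sum_snoc]
    have : ∀ ε : Fin n → Bool,
        W p q (n+1) (Fin.snoc ε false) + W p q (n+1) (Fin.snoc ε true) = W p q n ε := by
      intro ε; rw [W_snoc, W_snoc]; simp; ring
    rw [Finset.sum_congr rfl (fun ε _ => this ε), ih]

lemma W_pos (hp : ∀ n, p n ∈ Set.Ioo (0:ℝ) 1) (hq : ∀ n, q n ∈ Set.Ioo (0:ℝ) 1) :
    ∀ (n : ℕ) (ε : Fin n → Bool), 0 < W p q n ε := by
  intro n
  induction n with
  | zero => intro ε; norm_num [W]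
  | succ n ih =>
    intro ε
    show 0 < W p q n (Fin.init ε) * _
    have h := tr_mem hp hq n (lastb (Fin.init ε))
    apply mul_pos (ih _)
    cases ε (Fin.last n) <;> simp <;> [exact h.1; linarith [h.2]]

lemma W_le_one (hp : ∀ n, p n ∈ Set.Ioo (0:ℝ) 1) (hq : ∀ n, q n ∈ Set.Ioo (0:ℝ) 1)
    (n : ℕ) (ε : Fin n → Bool) : W p q n ε ≤ 1 := by
  have := sum_W (p := p) (q := q) n
  calc W p q n ε ≤ ∑ ε' : Fin n → Bool, W p q n ε' :=
        Finset.single_le_sum (fun ε' _ => (W_pos hp hq n ε').le) (Finset.mem_univ ε)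
    _ = 1 := this

/-- mass of generation-`n` cylinders whose last letter is `false`. -/
def M (p q : ℕ → ℝ) (n : ℕ) : ℝ :=
  ∑ ε : Fin n → Bool, (bif lastb ε then 0 else W p q n ε)

/-- entropy increment at step `n`. -/
def D (p q : ℕ → ℝ) (n : ℕ) : ℝ :=
  M p q n * Real.binEntropy (tr p q n false) + (1 - M p q n) * Real.binEntropy (tr p q n true)

/-- entropy of generation `n`. -/
def E (p q : ℕ → ℝ) (n : ℕ) : ℝ :=
  ∑ ε : Fin n → Bool, Real.negMulLog (W p q n ε)

lemma sum_last_split (n : ℕ) (g : Bool → ℝ) :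
    ∑ ε : Fin n → Bool, W p q n ε * g (lastb ε)
      = M p q n * g false + (1 - M p q n) * g true := by
  have key : ∀ ε : Fin n → Bool, W p q n ε * g (lastb ε)
      = (bif lastb ε then 0 else W p q n ε) * g false
        + (W p q n ε - (bif lastb ε then 0 else W p q n ε)) * g true := by
    intro ε; cases lastb ε <;> simp
  rw [Finset.sum_congr rfl (fun ε _ => key ε), Finset.sum_add_distrib]
  simp only [Finset.sum_sub_distrib, ← Finset.sum_mul, sum_W]
  rfl

lemma M_zero : M p q 0 = 1 := by
  simp [M, lastb, W]

lemma M_nonneg (hp : ∀ n, p n ∈ Set.Ioo (0:ℝ) 1) (hq : ∀ n, q n ∈ Set.Ioo (0:ℝ) 1)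
    (n : ℕ) : 0 ≤ M p q n := by
  apply Finset.sum_nonneg
  intro ε _
  cases lastb ε <;> simp [(W_pos hp hq n ε).le]

lemma M_le_one (hp : ∀ n, p n ∈ Set.Ioo (0:ℝ) 1) (hq : ∀ n, q n ∈ Set.Ioo (0:ℝ) 1)
    (n : ℕ) : M p q n ≤ 1 := by
  calc M p q n ≤ ∑ ε : Fin n → Bool, W p q n ε := by
        apply Finset.sum_le_sum
        intro ε _
        cases lastb ε <;> simp [(W_pos hp hq n ε).le]
    _ = 1 := sum_W n

lemma M_succ (n : ℕ) :
    M p q (n+1) = M p q n * tr p q n false + (1 - M p q n) * tr p q n true := by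
  rw [← sum_last_split n (tr p q n)]
  unfold M
  rw [sum_snoc]
  apply Finset.sum_congr rfl
  intro ε _
  have hl : ∀ b, lastb (Fin.snoc ε b : Fin (n+1) → Bool) = b := by
    intro b; simp [lastb, Fin.snoc_last]
  rw [hl, hl, W_snoc]
  simp

lemma E_zero : E p q 0 = 0 := by simp [E, W]

lemma E_succ (n : ℕ) : E p q (n+1) = E p q n + D p q n := by
  unfold E
  rw [sum_snoc]
  have key : ∀ ε : Fin n → Bool,
      Real.negMulLog (W p q (n+1) (Fin.snoc ε false)) +
        Real.negMulLog (W p q (n+1) (Fin.snoc ε true))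
      = Real.negMulLog (W p q n ε)
        + W p q n ε * Real.binEntropy (tr p q n (lastb ε)) := by
    intro ε
    rw [W_snoc, W_snoc]
    simp only [Bool.cond_false, Bool.cond_true]
    rw [Real.negMulLog_mul, Real.negMulLog_mul,
      Real.binEntropy_eq_negMulLog_add_negMulLog_one_sub]
    ring
  rw [Finset.sum_congr rfl (fun ε _ => key ε), Finset.sum_add_distrib,
    sum_last_split n (fun e => Real.binEntropy (tr p q n e))]
  rfl

lemma E_eq (n : ℕ) : E p q n = ∑ k ∈ Finset.range n, D p q k := by
  induction n with
  | zero => simp [E_zero]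
  | succ n ih => rw [E_succ, Finset.sum_range_succ, ih]


lemma weight_eq (n : ℕ) (e b : Bool) :
    weight (p (n+1), q (n+1)) e b
      = (bif b then 1 - tr p q (n+1) e else tr p q (n+1) e) := by
  cases e <;> cases b <;> simp [weight, tr]

lemma mu_cyl {μ : Measure K} [IsProbabilityMeasure μ]
    (hp : ∀ n, p n ∈ Set.Ioo (0:ℝ) 1) (hq : ∀ n, q n ∈ Set.Ioo (0:ℝ) 1)
    (hM : MarkovMeasure μ p q) :
    ∀ (n : ℕ) (ε : Fin n → Bool), μ (cyl ε) = ENNReal.ofReal (W p q n ε) := by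
  intro n
  induction n with
  | zero =>
    intro ε
    have : cyl ε = Set.univ := by
      ext x; simp [cyl]
    rw [this]
    simp [W]
  | succ n ih =>
    match n, ih with
    | 0, _ =>
      intro ε
      have hε : ε = ![ε 0] := by
        funext i; fin_cases i; simp
      have hW : W p q 1 ε = (bif ε 0 then 1 - p 0 else p 0) := by
        show W p q 0 (Fin.init ε) * _ = _
        have : ε (Fin.last 0) = ε 0 := rfl
        rw [this]
        simp [W, tr]
      rw [hW]
      cases h0 : ε 0
      · rw [hε, h0]; simpa using hM.1
      · rw [hε, h0]; simpa using hM.2.1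
    | n+1, ih =>
      intro ε
      have hsnoc := Fin.snoc_init_self ε
      rw [← hsnoc, hM.2.2 n (Fin.init ε) (ε (Fin.last (n+1))), ih, W_snoc]
      rw [← ENNReal.ofReal_mul (W_pos hp hq (n+1) (Fin.init ε)).le]
      congr 1
      have : lastb (Fin.init ε) = (Fin.init ε) (Fin.last n) := rfl
      rw [this, weight_eq]

lemma entropySum_eq {μ : Measure K} [IsProbabilityMeasure μ]
    (hp : ∀ n, p n ∈ Set.Ioo (0:ℝ) 1) (hq : ∀ n, q n ∈ Set.Ioo (0:ℝ) 1)
    (hM : MarkovMeasure μ p q) (n : ℕ) :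
    entropySum μ n = -(E p q n) := by
  unfold entropySum E
  rw [← Finset.sum_neg_distrib]
  apply Finset.sum_congr rfl
  intro ε _
  rw [mu_cyl hp hq hM n ε, ENNReal.toReal_ofReal (W_pos hp hq n ε).le]
  simp [Real.negMulLog]


lemma sqrt_mul_le_add_div_two {a b : ℝ} (ha : 0 ≤ a) (hb : 0 ≤ b) :
    Real.sqrt (a * b) ≤ (a + b) / 2 := by
  have h : a * b ≤ ((a + b) / 2) ^ 2 := by nlinarith [sq_nonneg (a - b)]
  calc Real.sqrt (a * b) ≤ Real.sqrt (((a + b) / 2) ^ 2) := Real.sqrt_le_sqrt h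
    _ = (a + b) / 2 := Real.sqrt_sq (by linarith)

lemma binEntropy_le_four_sqrt {s : ℝ} (h0 : 0 ≤ s) (h2 : s ≤ 1/2) :
    Real.binEntropy s ≤ 4 * Real.sqrt s := by
  rcases eq_or_lt_of_le h0 with h | h
  · simp [← h]
  have hs1 : s < 1 := by linarith
  have hsq : 0 < Real.sqrt s := Real.sqrt_pos.2 h
  have h1 : Real.negMulLog s ≤ 2 * Real.sqrt s := by
    have hlog : -Real.log s ≤ 2 / Real.sqrt s := by
      have h2' : Real.log (1 / Real.sqrt s) ≤ 1 / Real.sqrt s - 1 :=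
        Real.log_le_sub_one_of_pos (by positivity)
      rw [Real.log_div one_ne_zero (ne_of_gt hsq), Real.log_one, Real.log_sqrt h0] at h2'
      have hh : (2:ℝ) / Real.sqrt s = 2 * (1 / Real.sqrt s) := by ring
      rw [hh]
      linarith
    calc Real.negMulLog s = s * (-Real.log s) := by simp [Real.negMulLog]; try ring
      _ ≤ s * (2 / Real.sqrt s) := mul_le_mul_of_nonneg_left hlog h0
      _ = 2 * (s / Real.sqrt s) := by ring
      _ = 2 * Real.sqrt s := by rw [Real.div_sqrt]
  have h2'' : Real.negMulLog (1 - s) ≤ 2 * Real.sqrt s := by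
    have hpos : (0:ℝ) < 1 - s := by linarith
    have hlog : -Real.log (1 - s) ≤ s / (1 - s) := by
      have h5 := Real.log_le_sub_one_of_pos (show (0:ℝ) < 1 / (1 - s) by positivity)
      rw [Real.log_div one_ne_zero (ne_of_gt hpos), Real.log_one] at h5
      have h6 : -Real.log (1 - s) ≤ 1 / (1 - s) - 1 := by linarith
      have h7 : 1 / (1 - s) - 1 = s / (1 - s) := by field_simp; ring
      linarith [h7 ▸ h6]
    have hfrac : s / (1 - s) ≤ 2 * s := by
      rw [div_le_iff₀ hpos]; nlinarith
    have hs_sqrt : s ≤ Real.sqrt s := by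
      nlinarith [Real.sq_sqrt h0, Real.sqrt_nonneg s, sq_nonneg (Real.sqrt s - 1),
        Real.sqrt_le_sqrt (show s ≤ 1 by linarith)]
    have hlognn : 0 ≤ -Real.log (1 - s) := by
      have := Real.log_nonpos (by linarith) (by linarith : 1 - s ≤ 1)
      linarith
    calc Real.negMulLog (1 - s) = (1 - s) * (-Real.log (1 - s)) := by
          simp [Real.negMulLog]; try ring
      _ ≤ 1 * (s / (1 - s)) := mul_le_mul (by linarith) hlog hlognn zero_le_one
      _ = s / (1 - s) := one_mul _
      _ ≤ 2 * s := hfrac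
      _ ≤ 2 * Real.sqrt s := by linarith
  calc Real.binEntropy s = Real.negMulLog s + Real.negMulLog (1 - s) :=
        Real.binEntropy_eq_negMulLog_add_negMulLog_one_sub s
    _ ≤ 4 * Real.sqrt s := by linarith

lemma abs_binEntropy_sub_le {x y : ℝ} (hx : x ∈ Set.Icc (0:ℝ) 1) (hy : y ∈ Set.Icc (0:ℝ) 1) :
    |Real.binEntropy x - Real.binEntropy y| ≤ 4 * Real.sqrt (1 - |x - y|) := by
  wlog hxy : y ≤ x generalizing x y
  · rw [abs_sub_comm, abs_sub_comm x y]; exact this hy hx (by linarith)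
  set r := x - y with hr
  have hr0 : 0 ≤ r := by linarith
  have habs : |x - y| = r := abs_of_nonneg hr0
  rw [habs]
  have hr1 : r ≤ 1 := by rcases hx with ⟨_, hx1⟩; rcases hy with ⟨hy0, _⟩; linarith
  by_cases hcase : r ≤ 1/2
  · -- crude bound: |diff| ≤ log 2 ≤ 4 √(1/2) ≤ 4 √(1-r)
    have h1 : |Real.binEntropy x - Real.binEntropy y| ≤ Real.log 2 := by
      rw [abs_sub_le_iff]
      constructor <;>
      · have b1 := Real.binEntropy_le_log_two (p := x)
        have b2 := Real.binEntropy_le_log_two (p := y)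
        have n1 := Real.binEntropy_nonneg hx.1 hx.2
        have n2 := Real.binEntropy_nonneg hy.1 hy.2
        linarith
    have h2 : Real.log 2 ≤ 1 := by
      linarith [Real.log_two_lt_d9]
    have h3 : (1:ℝ) ≤ 4 * Real.sqrt (1 - r) := by
      have : Real.sqrt (1/2) ≤ Real.sqrt (1 - r) := Real.sqrt_le_sqrt (by linarith)
      have h4 : (1/4 : ℝ) ≤ Real.sqrt (1/2) := by
        rw [show (1/4:ℝ) = Real.sqrt ((1/4)^2) by rw [Real.sqrt_sq]; norm_num]
        exact Real.sqrt_le_sqrt (by norm_num)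
      linarith
    linarith
  · push_neg at hcase
    set s := 1 - r with hs
    have hs0 : 0 ≤ s := by linarith
    have hs2 : s ≤ 1/2 := by linarith
    have hEx : Real.binEntropy x ≤ Real.binEntropy s := by
      have hx_half : (2:ℝ)⁻¹ ≤ x := by
        have : r ≤ x := by linarith [hy.1]
        linarith
      have hr_half : (2:ℝ)⁻¹ ≤ r := by linarith
      have : Real.binEntropy x ≤ Real.binEntropy r := by
        rcases eq_or_lt_of_le (show r ≤ x by linarith [hy.1]) with h | h
        · rw [h]
        · exact le_of_lt (Real.binEntropy_strictAntiOn ⟨hr_half, hr1⟩ ⟨hx_half, hx.2⟩ h)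
      calc Real.binEntropy x ≤ Real.binEntropy r := this
        _ = Real.binEntropy s := by rw [hs, Real.binEntropy_one_sub]
    have hEy : Real.binEntropy y ≤ Real.binEntropy s := by
      have hy_le : y ≤ s := by linarith [hx.2]
      rcases eq_or_lt_of_le hy_le with h | h
      · rw [h]
      · exact le_of_lt (Real.binEntropy_strictMonoOn ⟨hy.1, by linarith⟩ ⟨hs0, by norm_num; linarith⟩ h)
    have hnx : 0 ≤ Real.binEntropy x := Real.binEntropy_nonneg hx.1 hx.2
    have hny : 0 ≤ Real.binEntropy y := Real.binEntropy_nonneg hy.1 hy.2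
    have hbound := binEntropy_le_four_sqrt hs0 hs2
    rw [abs_sub_le_iff]
    constructor <;> linarith


lemma limsup_le_limsup_add_const {u v : ℕ → ℝ} {c : ℝ}
    (hu0 : ∀ n, 0 ≤ u n) (hv1 : ∀ n, v n ≤ 1)
    (hv0 : ∀ n, 0 ≤ v n)
    (h : ∀ n, u n ≤ v n + c) :
    limsup u atTop ≤ limsup v atTop + c := by
  have h1 : limsup u atTop ≤ limsup (fun n => v n + c) atTop :=
    limsup_le_limsup (Eventually.of_forall h)
      (isCoboundedUnder_le_of_le atTop hu0)
      ⟨1 + c, eventually_map.2 (Eventually.of_forall fun n => by linarith [hv1 n])⟩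
  have h2 : limsup (fun n => v n + c) atTop = limsup v atTop + c :=
    limsup_add_const atTop v c ⟨1, eventually_map.2 (Eventually.of_forall hv1)⟩
      (isCoboundedUnder_le_of_le atTop hv0)
  linarith

lemma abs_limsup_sub_le {u v : ℕ → ℝ} {c : ℝ}
    (hu0 : ∀ n, 0 ≤ u n) (hu1 : ∀ n, u n ≤ 1)
    (hv0 : ∀ n, 0 ≤ v n) (hv1 : ∀ n, v n ≤ 1)
    (h : ∀ n, |u n - v n| ≤ c) :
    |limsup u atTop - limsup v atTop| ≤ c := by
  rw [abs_sub_le_iff]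
  constructor
  · have := limsup_le_limsup_add_const hu0 hv1 hv0
      (fun n => by linarith [(abs_le.1 (h n)).1, (abs_le.1 (h n)).2])
    linarith
  · have := limsup_le_limsup_add_const hv0 hu1 hu0
      (fun n => by linarith [(abs_le.1 (h n)).1, (abs_le.1 (h n)).2])
    linarith


lemma D_nonneg (hp : ∀ n, p n ∈ Set.Ioo (0:ℝ) 1) (hq : ∀ n, q n ∈ Set.Ioo (0:ℝ) 1)
    (k : ℕ) : 0 ≤ D p q k := by
  have h1 := tr_mem hp hq k false
  have h2 := tr_mem hp hq k true
  have b1 := Real.binEntropy_nonneg h1.1.le h1.2.le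
  have b2 := Real.binEntropy_nonneg h2.1.le h2.2.le
  have m0 := M_nonneg hp hq k
  have m1 := M_le_one hp hq k
  unfold D
  nlinarith

lemma D_le_log_two (hp : ∀ n, p n ∈ Set.Ioo (0:ℝ) 1) (hq : ∀ n, q n ∈ Set.Ioo (0:ℝ) 1)
    (k : ℕ) : D p q k ≤ Real.log 2 := by
  have b1 := Real.binEntropy_le_log_two (p := tr p q k false)
  have b2 := Real.binEntropy_le_log_two (p := tr p q k true)
  have m0 := M_nonneg hp hq k
  have m1 := M_le_one hp hq k
  unfold D
  nlinarith

lemma E_nonneg (hp : ∀ n, p n ∈ Set.Ioo (0:ℝ) 1) (hq : ∀ n, q n ∈ Set.Ioo (0:ℝ) 1)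
    (n : ℕ) : 0 ≤ E p q n := by
  rw [E_eq]
  exact Finset.sum_nonneg fun k _ => D_nonneg hp hq k

lemma E_le (hp : ∀ n, p n ∈ Set.Ioo (0:ℝ) 1) (hq : ∀ n, q n ∈ Set.Ioo (0:ℝ) 1)
    (n : ℕ) : E p q n ≤ n * Real.log 2 := by
  rw [E_eq]
  calc ∑ k ∈ Finset.range n, D p q k ≤ ∑ k ∈ Finset.range n, Real.log 2 :=
        Finset.sum_le_sum fun k _ => D_le_log_two hp hq k
    _ = n * Real.log 2 := by simp [Finset.sum_const, Finset.card_range, nsmul_eq_mul]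

/-- The main quantitative comparison of the entropies of two Markov weight systems. -/
lemma E_diff_le {p q p' q' : ℕ → ℝ} {ζ δ ε₁ : ℝ}
    (hp : ∀ n, p n ∈ Set.Ioo (0:ℝ) 1) (hq : ∀ n, q n ∈ Set.Ioo (0:ℝ) 1)
    (hp' : ∀ n, p' n ∈ Set.Ioo (0:ℝ) 1) (hq' : ∀ n, q' n ∈ Set.Ioo (0:ℝ) 1)
    (hζ : 0 < ζ) (hζδ : ζ < δ) (hε₁ : 0 ≤ ε₁)
    (hδ : ∀ x ∈ Set.Icc (0:ℝ) 1, ∀ y ∈ Set.Icc (0:ℝ) 1, |x - y| < δ →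
      |Real.binEntropy x - Real.binEntropy y| < ε₁)
    (htr : ∀ n e, |tr p q n e - tr p' q' n e| ≤ ζ) (n : ℕ) :
    |E p q n - E p' q' n| ≤ n * (2 * ε₁ + 4 * Real.sqrt ζ) := by
  set Δ : ℕ → ℝ := fun k => |M p q k - M p' q' k| with hΔdef
  set r : ℕ → ℝ := fun k => |tr p' q' k false - tr p' q' k true| with hrdef
  have hΔnn : ∀ k, 0 ≤ Δ k := fun k => abs_nonneg _
  have hΔ0 : Δ 0 = 0 := by simp [hΔdef, M_zero]
  have hΔ1 : ∀ k, Δ k ≤ 1 := by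
    intro k
    have m0 := M_nonneg hp hq k
    have m1 := M_le_one hp hq k
    have m0' := M_nonneg hp' hq' k
    have m1' := M_le_one hp' hq' k
    exact abs_le.2 ⟨by linarith, by linarith⟩
  have hr0 : ∀ k, 0 ≤ r k := fun k => abs_nonneg _
  have hr1 : ∀ k, r k ≤ 1 := by
    intro k
    have h1 := tr_mem hp' hq' k false
    have h2 := tr_mem hp' hq' k true
    exact abs_le.2 ⟨by linarith [h1.1, h2.2], by linarith [h1.2, h2.1]⟩
  have hrec : ∀ k, Δ (k+1) ≤ ζ + Δ k * r k := by
    intro k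
    have m0 := M_nonneg hp hq k
    have m1 := M_le_one hp hq k
    have e1 : M p q (k+1) - M p' q' (k+1)
        = M p q k * (tr p q k false - tr p' q' k false)
          + (1 - M p q k) * (tr p q k true - tr p' q' k true)
          + (M p q k - M p' q' k) * (tr p' q' k false - tr p' q' k true) := by
      rw [M_succ, M_succ]; ring
    have b1 : |M p q k * (tr p q k false - tr p' q' k false)| ≤ M p q k * ζ := by
      rw [abs_mul, abs_of_nonneg m0]
      exact mul_le_mul_of_nonneg_left (htr k false) m0
    have b2 : |(1 - M p q k) * (tr p q k true - tr p' q' k true)| ≤ (1 - M p q k) * ζ := by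
      rw [abs_mul, abs_of_nonneg (by linarith)]
      exact mul_le_mul_of_nonneg_left (htr k true) (by linarith)
    have b3 : |(M p q k - M p' q' k) * (tr p' q' k false - tr p' q' k true)| = Δ k * r k :=
      abs_mul _ _
    have habs : Δ (k+1) ≤ |M p q k * (tr p q k false - tr p' q' k false)|
        + |(1 - M p q k) * (tr p q k true - tr p' q' k true)|
        + |(M p q k - M p' q' k) * (tr p' q' k false - tr p' q' k true)| := by
      show |M p q (k+1) - M p' q' (k+1)| ≤ _
      rw [e1]
      exact (abs_add_le _ _).trans (by linarith [abs_add_le (M p q k * (tr p q k false - tr p' q' k false)) ((1 - M p q k) * (tr p q k true - tr p' q' k true))])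
    have hsum : M p q k * ζ + (1 - M p q k) * ζ = ζ := by ring
    linarith
  have hstep : ∀ k, |D p q k - D p' q' k| ≤ 2 * ε₁ + Δ k * (4 * Real.sqrt (1 - r k)) := by
    intro k
    have m0 := M_nonneg hp hq k
    have m1 := M_le_one hp hq k
    have ta := tr_mem hp hq k false
    have tb := tr_mem hp hq k true
    have ta' := tr_mem hp' hq' k false
    have tb' := tr_mem hp' hq' k true
    have e1 : D p q k - D p' q' k
        = M p q k * (Real.binEntropy (tr p q k false) - Real.binEntropy (tr p' q' k false))
          + (1 - M p q k) * (Real.binEntropy (tr p q k true) - Real.binEntropy (tr p' q' k true))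
          + (M p q k - M p' q' k) * (Real.binEntropy (tr p' q' k false) - Real.binEntropy (tr p' q' k true)) := by
      unfold D; ring
    have m1a : |Real.binEntropy (tr p q k false) - Real.binEntropy (tr p' q' k false)| ≤ ε₁ :=
      (hδ _ ⟨ta.1.le, ta.2.le⟩ _ ⟨ta'.1.le, ta'.2.le⟩ ((htr k false).trans_lt hζδ)).le
    have m1b : |Real.binEntropy (tr p q k true) - Real.binEntropy (tr p' q' k true)| ≤ ε₁ :=
      (hδ _ ⟨tb.1.le, tb.2.le⟩ _ ⟨tb'.1.le, tb'.2.le⟩ ((htr k true).trans_lt hζδ)).le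
    have m3 : |Real.binEntropy (tr p' q' k false) - Real.binEntropy (tr p' q' k true)|
        ≤ 4 * Real.sqrt (1 - r k) :=
      abs_binEntropy_sub_le ⟨ta'.1.le, ta'.2.le⟩ ⟨tb'.1.le, tb'.2.le⟩
    have b1 : |M p q k * (Real.binEntropy (tr p q k false) - Real.binEntropy (tr p' q' k false))|
        ≤ M p q k * ε₁ := by
      rw [abs_mul, abs_of_nonneg m0]
      exact mul_le_mul_of_nonneg_left m1a m0
    have b2 : |(1 - M p q k) * (Real.binEntropy (tr p q k true) - Real.binEntropy (tr p' q' k true))|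
        ≤ (1 - M p q k) * ε₁ := by
      rw [abs_mul, abs_of_nonneg (by linarith)]
      exact mul_le_mul_of_nonneg_left m1b (by linarith)
    have b3 : |(M p q k - M p' q' k) * (Real.binEntropy (tr p' q' k false) - Real.binEntropy (tr p' q' k true))|
        ≤ Δ k * (4 * Real.sqrt (1 - r k)) := by
      rw [abs_mul]
      exact mul_le_mul_of_nonneg_left m3 (hΔnn k)
    have habs : |D p q k - D p' q' k|
        ≤ |M p q k * (Real.binEntropy (tr p q k false) - Real.binEntropy (tr p' q' k false))|
          + |(1 - M p q k) * (Real.binEntropy (tr p q k true) - Real.binEntropy (tr p' q' k true))|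
          + |(M p q k - M p' q' k) * (Real.binEntropy (tr p' q' k false) - Real.binEntropy (tr p' q' k true))| := by
      rw [e1]
      exact (abs_add_le _ _).trans (by linarith [abs_add_le (M p q k * (Real.binEntropy (tr p q k false) - Real.binEntropy (tr p' q' k false))) ((1 - M p q k) * (Real.binEntropy (tr p q k true) - Real.binEntropy (tr p' q' k true)))])
    have hsum : M p q k * ε₁ + (1 - M p q k) * ε₁ = ε₁ := by ring
    linarith
  have hζs : 0 < Real.sqrt ζ := Real.sqrt_pos.2 hζ
  have hAM : ∀ k, Δ k * (4 * Real.sqrt (1 - r k))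
      ≤ 2 * (Δ k * (1 - r k)) / Real.sqrt ζ + 2 * Real.sqrt ζ := by
    intro k
    have h1r : 0 ≤ 1 - r k := by linarith [hr1 k]
    have s1 : Δ k * Real.sqrt (1 - r k) ≤ Real.sqrt (Δ k * (1 - r k)) := by
      have e : Δ k * Real.sqrt (1 - r k) = Real.sqrt (Δ k ^ 2 * (1 - r k)) := by
        rw [Real.sqrt_mul (sq_nonneg _), Real.sqrt_sq (hΔnn k)]
      rw [e]
      apply Real.sqrt_le_sqrt
      have hsq : Δ k ^ 2 ≤ Δ k := by nlinarith [hΔ1 k, hΔnn k]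
      exact mul_le_mul_of_nonneg_right hsq h1r
    have s2 : Real.sqrt (Δ k * (1 - r k))
        ≤ (Δ k * (1 - r k) / Real.sqrt ζ + Real.sqrt ζ) / 2 := by
      have e : Δ k * (1 - r k) = (Δ k * (1 - r k) / Real.sqrt ζ) * Real.sqrt ζ := by
        field_simp
      calc Real.sqrt (Δ k * (1 - r k))
          = Real.sqrt ((Δ k * (1 - r k) / Real.sqrt ζ) * Real.sqrt ζ) := by rw [← e]
        _ ≤ (Δ k * (1 - r k) / Real.sqrt ζ + Real.sqrt ζ) / 2 :=
            sqrt_mul_le_add_div_two (by positivity) hζs.le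
    calc Δ k * (4 * Real.sqrt (1 - r k)) = 4 * (Δ k * Real.sqrt (1 - r k)) := by ring
      _ ≤ 4 * Real.sqrt (Δ k * (1 - r k)) := by linarith
      _ ≤ 4 * ((Δ k * (1 - r k) / Real.sqrt ζ + Real.sqrt ζ) / 2) := by linarith
      _ = 2 * (Δ k * (1 - r k)) / Real.sqrt ζ + 2 * Real.sqrt ζ := by ring
  have hterm : ∀ k, Δ k * (1 - r k) ≤ (Δ k - Δ (k+1)) + ζ := by
    intro k
    nlinarith [hrec k]
  have htel : ∑ k ∈ Finset.range n, Δ k * (1 - r k) ≤ n * ζ := by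
    calc ∑ k ∈ Finset.range n, Δ k * (1 - r k)
        ≤ ∑ k ∈ Finset.range n, ((Δ k - Δ (k+1)) + ζ) :=
          Finset.sum_le_sum fun k _ => hterm k
      _ = (Δ 0 - Δ n) + n * ζ := by
          rw [Finset.sum_add_distrib, Finset.sum_range_sub' Δ]
          simp [Finset.sum_const, Finset.card_range, nsmul_eq_mul]
      _ ≤ n * ζ := by rw [hΔ0]; linarith [hΔnn n]
  have hE : E p q n - E p' q' n = ∑ k ∈ Finset.range n, (D p q k - D p' q' k) := by
    rw [E_eq, E_eq, Finset.sum_sub_distrib]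
  calc |E p q n - E p' q' n| ≤ ∑ k ∈ Finset.range n, |D p q k - D p' q' k| := by
        rw [hE]; exact Finset.abs_sum_le_sum_abs _ _
    _ ≤ ∑ k ∈ Finset.range n, ((2 * ε₁ + 2 * Real.sqrt ζ) + (2 / Real.sqrt ζ) * (Δ k * (1 - r k))) := by
        apply Finset.sum_le_sum
        intro k _
        have := (hstep k).trans (by linarith [hAM k] :
          2 * ε₁ + Δ k * (4 * Real.sqrt (1 - r k))
            ≤ 2 * ε₁ + (2 * (Δ k * (1 - r k)) / Real.sqrt ζ + 2 * Real.sqrt ζ))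
        calc |D p q k - D p' q' k|
            ≤ 2 * ε₁ + (2 * (Δ k * (1 - r k)) / Real.sqrt ζ + 2 * Real.sqrt ζ) := this
          _ = (2 * ε₁ + 2 * Real.sqrt ζ) + (2 / Real.sqrt ζ) * (Δ k * (1 - r k)) := by ring
    _ = n * (2 * ε₁ + 2 * Real.sqrt ζ) + (2 / Real.sqrt ζ) * ∑ k ∈ Finset.range n, Δ k * (1 - r k) := by
        rw [Finset.sum_add_distrib, ← Finset.mul_sum]
        simp [Finset.sum_const, Finset.card_range, nsmul_eq_mul]
        ring
    _ ≤ n * (2 * ε₁ + 2 * Real.sqrt ζ) + (2 / Real.sqrt ζ) * (n * ζ) := by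
        have := mul_le_mul_of_nonneg_left htel (by positivity : (0:ℝ) ≤ 2 / Real.sqrt ζ)
        linarith
    _ = n * (2 * ε₁ + 4 * Real.sqrt ζ) := by
        rw [show (2 / Real.sqrt ζ) * ((n:ℝ) * ζ) = 2 * n * (ζ / Real.sqrt ζ) by ring,
          Real.div_sqrt]
        ring

end MarkovAux

/-- **Theorem 2 (packing/entropy part).** The upper entropy (equivalently, by the main
theorem, the lower packing dimension) of a non-homogeneous Markov measure is a continuous
function of the weight sequences for the `ℓ^∞` norm: for every `ε > 0` there is `ζ > 0`
such that whenever `μ, μ'` satisfy (M) with weights `(pₙ, qₙ)`, `(p'ₙ, q'ₙ) ⊆ (0,1)` and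
`sup_n max(|pₙ - p'ₙ|, |qₙ - q'ₙ|) < ζ`, one has `|h^*(μ) - h^*(μ')| < ε`. -/
theorem markov_upper_entropy_continuous :
    ∀ ε > (0 : ℝ), ∃ ζ > (0 : ℝ),
      ∀ (μ μ' : Measure K), IsProbabilityMeasure μ → IsProbabilityMeasure μ' →
        ∀ (p q p' q' : ℕ → ℝ),
          (∀ n, p n ∈ Set.Ioo (0 : ℝ) 1) → (∀ n, q n ∈ Set.Ioo (0 : ℝ) 1) →
          (∀ n, p' n ∈ Set.Ioo (0 : ℝ) 1) → (∀ n, q' n ∈ Set.Ioo (0 : ℝ) 1) →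
          MarkovMeasure μ p q → MarkovMeasure μ' p' q' →
          (⨆ n : ℕ, max |p n - p' n| |q n - q' n|) < ζ →
          |hUpp μ - hUpp μ'| < ε := by
  intro ε hε
  have hlog2 : (0:ℝ) < Real.log 2 := Real.log_pos one_lt_two
  set ε₁ := ε * Real.log 2 / 8 with hε₁def
  have hε₁ : 0 < ε₁ := by positivity
  -- uniform continuity modulus for `binEntropy` on `[0,1]`
  obtain ⟨δ, hδ0, hδ⟩ : ∃ δ > 0, ∀ x ∈ Set.Icc (0:ℝ) 1, ∀ y ∈ Set.Icc (0:ℝ) 1,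
      |x - y| < δ → |Real.binEntropy x - Real.binEntropy y| < ε₁ := by
    have huc : UniformContinuousOn Real.binEntropy (Set.Icc (0:ℝ) 1) :=
      IsCompact.uniformContinuousOn_of_continuous isCompact_Icc
        Real.binEntropy_continuous.continuousOn
    rw [Metric.uniformContinuousOn_iff] at huc
    obtain ⟨δ, hδ0, hδ⟩ := huc ε₁ hε₁
    exact ⟨δ, hδ0, fun x hx y hy hxy => by
      simpa [Real.dist_eq] using hδ x hx y hy (by simpa [Real.dist_eq] using hxy)⟩
  refine ⟨min (δ / 2) ((ε * Real.log 2 / 16) ^ 2), by positivity, ?_⟩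
  set ζ := min (δ / 2) ((ε * Real.log 2 / 16) ^ 2) with hζdef
  have hζ : 0 < ζ := by positivity
  have hζδ : ζ < δ := (min_le_left _ _).trans_lt (by linarith)
  have hζsq : Real.sqrt ζ ≤ ε * Real.log 2 / 16 := by
    calc Real.sqrt ζ ≤ Real.sqrt ((ε * Real.log 2 / 16) ^ 2) :=
          Real.sqrt_le_sqrt (min_le_right _ _)
      _ = ε * Real.log 2 / 16 := Real.sqrt_sq (by positivity)
  intro μ μ' hμ hμ' p q p' q' hp hq hp' hq' hμM hμM' hsup
  haveI := hμ
  haveI := hμ'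
  -- extract coordinatewise bounds from the sup bound
  have hbdd : BddAbove (Set.range fun n => max |p n - p' n| |q n - q' n|) := by
    refine ⟨1, ?_⟩
    rintro x ⟨n, rfl⟩
    have h1 : |p n - p' n| ≤ 1 :=
      abs_le.2 ⟨by linarith [(hp n).1, (hp' n).2], by linarith [(hp n).2, (hp' n).1]⟩
    have h2 : |q n - q' n| ≤ 1 :=
      abs_le.2 ⟨by linarith [(hq n).1, (hq' n).2], by linarith [(hq n).2, (hq' n).1]⟩
    exact max_le h1 h2
  have hcoord : ∀ n, |p n - p' n| ≤ ζ ∧ |q n - q' n| ≤ ζ := by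
    intro n
    have h := (le_ciSup hbdd n).trans_lt hsup
    exact ⟨(le_max_left _ _).trans h.le, (le_max_right _ _).trans h.le⟩
  have htr : ∀ n e, |MarkovAux.tr p q n e - MarkovAux.tr p' q' n e| ≤ ζ := by
    intro n e
    unfold MarkovAux.tr
    by_cases hn0 : n = 0
    · simp only [hn0, if_pos rfl]
      exact (hcoord 0).1
    · simp only [if_neg hn0]
      cases e
      · simpa using (hcoord n).1
      · simpa using (hcoord n).2
  have hE := MarkovAux.E_diff_le hp hq hp' hq' hζ hζδ hε₁.le hδ htr
  -- the normalized entropy sequences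
  set u : ℕ → ℝ := fun n => MarkovAux.E p q n / (n * Real.log 2) with hudef
  set v : ℕ → ℝ := fun n => MarkovAux.E p' q' n / (n * Real.log 2) with hvdef
  have hUu : hUpp μ = Filter.limsup u Filter.atTop := by
    unfold hUpp
    congr 1
    funext n
    rw [MarkovAux.entropySum_eq hp hq hμM n, hudef]
    ring
  have hUv : hUpp μ' = Filter.limsup v Filter.atTop := by
    unfold hUpp
    congr 1
    funext n
    rw [MarkovAux.entropySum_eq hp' hq' hμM' n, hvdef]
    ring
  set c : ℝ := (2 * ε₁ + 4 * Real.sqrt ζ) / Real.log 2 with hcdef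
  have hc0 : 0 ≤ c := by positivity
  have hbounds : ∀ (P Q : ℕ → ℝ), (∀ n, P n ∈ Set.Ioo (0:ℝ) 1) → (∀ n, Q n ∈ Set.Ioo (0:ℝ) 1) →
      ∀ n : ℕ, 0 ≤ MarkovAux.E P Q n / (n * Real.log 2) ∧
        MarkovAux.E P Q n / (n * Real.log 2) ≤ 1 := by
    intro P Q hP hQ n
    rcases Nat.eq_zero_or_pos n with h0 | hpos
    · subst h0
      simp [MarkovAux.E_zero]
    · have hnp : (0:ℝ) < n * Real.log 2 := by
        have : (0:ℝ) < (n:ℝ) := by exact_mod_cast hpos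
        positivity
      constructor
      · exact div_nonneg (MarkovAux.E_nonneg hP hQ n) hnp.le
      · rw [div_le_one hnp]
        exact MarkovAux.E_le hP hQ n
  have hdiff : ∀ n, |u n - v n| ≤ c := by
    intro n
    rcases Nat.eq_zero_or_pos n with h0 | hpos
    · subst h0
      simp [hudef, hvdef, MarkovAux.E_zero, hc0]
    · have hnp : (0:ℝ) < n * Real.log 2 := by
        have : (0:ℝ) < (n:ℝ) := by exact_mod_cast hpos
        positivity
      have e1 : u n - v n = (MarkovAux.E p q n - MarkovAux.E p' q' n) / (n * Real.log 2) := by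
        rw [hudef, hvdef]
        ring
      rw [e1, abs_div, abs_of_pos hnp]
      rw [div_le_iff₀ hnp]
      calc |MarkovAux.E p q n - MarkovAux.E p' q' n|
          ≤ n * (2 * ε₁ + 4 * Real.sqrt ζ) := hE n
        _ = c * (n * Real.log 2) := by rw [hcdef]; field_simp
  have hfinal : |hUpp μ - hUpp μ'| ≤ c := by
    rw [hUu, hUv]
    exact MarkovAux.abs_limsup_sub_le
      (fun n => (hbounds p q hp hq n).1) (fun n => (hbounds p q hp hq n).2)
      (fun n => (hbounds p' q' hp' hq' n).1) (fun n => (hbounds p' q' hp' hq' n).2)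
      hdiff
  have hcε : c < ε := by
    rw [hcdef, div_lt_iff₀ hlog2]
    have h1 : 2 * ε₁ = ε * Real.log 2 / 4 := by rw [hε₁def]; ring
    nlinarith [hζsq, Real.sqrt_nonneg ζ]
  linarith [hfinal, hcε, abs_nonneg (hUpp μ - hUpp μ')]
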